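/- Let g: ℝⁿ → (-∞, ∞] be a proper lower semicontinuous convex function that is coercive (i.e., g(x)/‖x‖ → ∞ as ‖x‖ → ∞). Then the set ⋃_{x ∈ ℝⁿ} ∂g(x) is closed in ℝⁿ. -/

import Mathlib

noncomputable section

open Set

lemma add_coe_eq_top {x : EReal} {r : ℝ} (h : x + (r : EReal) = ⊤) : x = ⊤ := by
  induction x using EReal.rec with
  | bot => simp at h
  | coe a => rw [← EReal.coe_add] at h; exact absurd h (EReal.coe_ne_top _)
  | top => rfl

lemma add_coe_eq_bot {x : EReal} {r : ℝ} (h : x + (r : EReal) = ⊥) : x = ⊥ := by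
  induction x using EReal.rec with
  | bot => rfl
  | coe a => rw [← EReal.coe_add] at h; exact absurd h (EReal.coe_ne_bot _)
  | top => rw [EReal.top_add_of_ne_bot (EReal.coe_ne_bot _)] at h; simp at h

/-- A lower semicontinuous `EReal`-valued function attains its min on a nonempty compact set. -/
lemma lsc_exists_min {α : Type*} [TopologicalSpace α] {f : α → EReal} {K : Set α}
    (hK : IsCompact K) (hKc : IsClosed K) (hne : K.Nonempty) (hf : LowerSemicontinuous f) :
    ∃ x ∈ K, ∀ y ∈ K, f x ≤ f y := by
  set m : EReal := sInf (f '' K) with hm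
  by_cases hmt : m = ⊤
  · obtain ⟨x, hx⟩ := hne
    exact ⟨x, hx, fun y hy => by
      have : f y = ⊤ := top_le_iff.mp (hmt ▸ sInf_le (mem_image_of_mem f hy))
      simp [this]⟩
  · have hlt : m < ⊤ := lt_top_iff_ne_top.mpr hmt
    set ι := {t : EReal // m < t}
    have : Nonempty ι := ⟨⟨⊤, hlt⟩⟩
    set S : ι → Set α := fun t => K ∩ f ⁻¹' (Iic t.1) with hS
    have hcl : ∀ t : ι, IsClosed (S t) := fun t =>
      hKc.inter (hf.isClosed_preimage t.1)
    have hcomp : ∀ t : ι, IsCompact (S t) := fun t =>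
      hK.of_isClosed_subset (hcl t) inter_subset_left
    have hnonempty : ∀ t : ι, (S t).Nonempty := by
      rintro ⟨t, ht⟩
      obtain ⟨e, ⟨y, hy, rfl⟩, het⟩ := exists_lt_of_csInf_lt (hne.image f) ht
      exact ⟨y, hy, le_of_lt het⟩
    have hdir : Directed (· ⊇ ·) S := by
      rintro ⟨s, hs⟩ ⟨t, ht⟩
      refine ⟨⟨min s t, lt_min hs ht⟩, fun x hx => ⟨hx.1, ?_⟩, fun x hx => ⟨hx.1, ?_⟩⟩
      · have h2 : f x ≤ min s t := hx.2
        exact h2.trans (min_le_left s t)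
      · have h2 : f x ≤ min s t := hx.2
        exact h2.trans (min_le_right s t)
    obtain ⟨x, hx⟩ := IsCompact.nonempty_iInter_of_directed_nonempty_isCompact_isClosed S
      hdir hnonempty hcomp hcl
    have hxK : x ∈ K := (mem_iInter.mp hx ⟨⊤, hlt⟩).1
    refine ⟨x, hxK, fun y hy => ?_⟩
    have hfx : f x ≤ m := by
      by_contra h
      push_neg at h
      obtain ⟨t, hmt', htf⟩ := exists_between h
      exact absurd (mem_iInter.mp hx ⟨t, hmt'⟩).2 (not_le.mpr htf)
    exact hfx.trans (sInf_le (mem_image_of_mem f hy))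


/-- `ℝⁿ`. -/
abbrev E (n : ℕ) := EuclideanSpace ℝ (Fin n)

/-- Convex subdifferential of an extended-real-valued function. -/
def subdiffE {n : ℕ} (g : E n → EReal) (x : E n) : Set (E n) :=
  {v | ∀ y, ((inner ℝ v (y - x) : ℝ) : EReal) + g x ≤ g y}

/-- Convexity for extended-real-valued functions. -/
def ConvexE {n : ℕ} (g : E n → EReal) : Prop :=
  ∀ x y : E n, ∀ t : ℝ, 0 ≤ t → t ≤ 1 →
    g (t • x + (1 - t) • y) ≤ (t : EReal) * g x + ((1 - t : ℝ) : EReal) * g y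

/-- Coercivity: `g(x)/‖x‖ → ∞` as `‖x‖ → ∞`. -/
def CoerciveE {n : ℕ} (g : E n → EReal) : Prop :=
  ∀ c : ℝ, ∃ R : ℝ, ∀ x : E n, R ≤ ‖x‖ → ((c * ‖x‖ : ℝ) : EReal) ≤ g x

theorem subdiff_range_closed {n : ℕ} (g : E n → EReal)
    (hnb : ∀ x, g x ≠ ⊥) (hp : ∃ x, g x ≠ ⊤)
    (hlsc : LowerSemicontinuous g) (hconv : ConvexE g)
    (hcoer : CoerciveE g) :
    IsClosed (⋃ x, subdiffE g x) := by
  suffices h : (⋃ x, subdiffE g x) = Set.univ by rw [h]; exact isClosed_univ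
  rw [Set.eq_univ_iff_forall]
  intro v
  -- the perturbed function f x = g x - ⟨v, x⟩
  set f : E n → EReal := fun x => g x + ((-(inner ℝ v x : ℝ) : ℝ) : EReal) with hf
  have hinnercont : Continuous fun x : E n => (inner ℝ v x : ℝ) :=
    Continuous.inner continuous_const continuous_id
  have hflsc : LowerSemicontinuous f := by
    apply hlsc.add'
    · exact (continuous_coe_real_ereal.comp hinnercont.neg).lowerSemicontinuous
    · intro x
      apply EReal.continuousAt_add
      · right; exact EReal.coe_ne_bot _
      · right; exact EReal.coe_ne_top _
  obtain ⟨x₀, hx₀⟩ := hp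
  have hfx₀ : f x₀ ≠ ⊤ := fun h => hx₀ (add_coe_eq_top h)
  have hfx₀b : f x₀ ≠ ⊥ := fun h => hnb x₀ (add_coe_eq_bot h)
  set M : ℝ := (f x₀).toReal with hM
  have hfM : f x₀ = (M : EReal) := (EReal.coe_toReal hfx₀ hfx₀b).symm
  obtain ⟨R, hR⟩ := hcoer (‖v‖ + 1)
  set R₁ : ℝ := max R (max ‖x₀‖ (|M| + 1)) with hR₁
  -- Outside the ball of radius R₁, f is large
  have hout : ∀ x : E n, R₁ ≤ ‖x‖ → ((M : EReal) ≤ f x) := by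
    intro x hx
    have h1 : R ≤ ‖x‖ := le_trans (le_max_left _ _) hx
    have h2 : |M| + 1 ≤ ‖x‖ :=
      le_trans (le_trans (le_max_right _ _) (le_max_right _ _)) hx
    have hg : (((‖v‖ + 1) * ‖x‖ : ℝ) : EReal) ≤ g x := hR x h1
    have key : ((M : ℝ) : EReal) ≤ (((‖v‖ + 1) * ‖x‖ - inner ℝ v x : ℝ) : EReal) := by
      rw [EReal.coe_le_coe_iff]
      have hinner : inner ℝ v x ≤ ‖v‖ * ‖x‖ := real_inner_le_norm v x
      nlinarith [abs_nonneg M, le_abs_self M, norm_nonneg x, norm_nonneg v]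
    calc ((M : ℝ) : EReal) ≤ (((‖v‖ + 1) * ‖x‖ - inner ℝ v x : ℝ) : EReal) := key
      _ = (((‖v‖ + 1) * ‖x‖ : ℝ) : EReal) + ((-(inner ℝ v x : ℝ) : ℝ) : EReal) := by
          rw [← EReal.coe_add]; ring_nf
      _ ≤ g x + ((-(inner ℝ v x : ℝ) : ℝ) : EReal) := by
          exact add_le_add_left hg _
  -- minimize f on the closed ball
  have hx₀ball : x₀ ∈ Metric.closedBall (0 : E n) R₁ := by
    simp only [Metric.mem_closedBall, dist_zero_right]
    exact le_trans (le_max_left _ _) (le_max_right _ _)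
  obtain ⟨z, hzK, hzmin⟩ := lsc_exists_min (isCompact_closedBall (0 : E n) R₁)
    Metric.isClosed_closedBall ⟨x₀, hx₀ball⟩ hflsc
  -- z is a global minimizer of f
  have hglobal : ∀ y, f z ≤ f y := by
    intro y
    by_cases hy : y ∈ Metric.closedBall (0 : E n) R₁
    · exact hzmin y hy
    · simp only [Metric.mem_closedBall, dist_zero_right, not_le] at hy
      calc f z ≤ f x₀ := hzmin x₀ hx₀ball
        _ = (M : EReal) := hfM
        _ ≤ f y := hout y hy.le
  -- g z is finite
  have hgzt : g z ≠ ⊤ := by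
    intro h
    have h1 : f z = ⊤ := by
      simp only [hf, h]
      exact EReal.top_add_of_ne_bot (EReal.coe_ne_bot _)
    have h2 : f z < ⊤ := (hglobal x₀).trans_lt (hfM ▸ EReal.coe_lt_top M)
    exact h2.ne h1
  set b : ℝ := (g z).toReal with hb
  have hgz : g z = (b : EReal) := (EReal.coe_toReal hgzt (hnb z)).symm
  -- v ∈ ∂g(z)
  refine Set.mem_iUnion.mpr ⟨z, fun y => ?_⟩
  have hfy := hglobal y
  by_cases hgy : g y = ⊤
  · simp [hgy]
  · set c : ℝ := (g y).toReal with hc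
    have hgyc : g y = (c : EReal) := (EReal.coe_toReal hgy (hnb y)).symm
    rw [hgz, hgyc]
    rw [hf] at hfy
    simp only [hgz, hgyc, ← EReal.coe_add, EReal.coe_le_coe_iff] at hfy ⊢
    have : inner ℝ v (y - z) = inner ℝ v y - (inner ℝ v z : ℝ) := inner_sub_right v y z
    linarith
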